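/- Define \lambda_t on ab-monomials by \lambda_t(b^m) = (a-b)^m, \lambda_t(b^m a) = (a-b)^{m+1}, and 0 otherwise. Then for a graded poset P of rank at least 1, \lambda_t(\Psi(P)) = Z_t(P) \cdot (a-b)^{\rho(P)-1}, where Z_t(P) = (-1)^{\rho(P)-1} \sum_{x \text{ coatom of } P} \mu(\hat{0},x). -/

import Mathlib

open Finset

/-- The ring `ℤ⟨a,b⟩` of noncommutative polynomials in the variables `a` and `b`,
realized as the monoid algebra of the free monoid on two letters
(`false` encodes the letter `a` and `true` the letter `b`). -/
abbrev AB : Type := MonoidAlgebra ℤ (FreeMonoid Bool)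

/-- The variable `a`. -/
noncomputable def aV : AB := MonoidAlgebra.single (FreeMonoid.ofList [false]) 1

/-- The variable `b`. -/
noncomputable def bV : AB := MonoidAlgebra.single (FreeMonoid.ofList [true]) 1

/-- The `ab`-monomial `u_S` of degree `n`, with `b` in the positions of `S`. -/
def word (n : ℕ) (S : Finset ℕ) : FreeMonoid Bool :=
  FreeMonoid.ofList (List.ofFn fun i : Fin n => decide ((i : ℕ) + 1 ∈ S))

/-- The flag `f`-vector entry `f_S`. -/
noncomputable def flagF (P : Type*) [PartialOrder P] (ρ : P → ℕ) (S : Finset ℕ) : ℤ :=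
  ({c : Finset P | IsChain (· ≤ ·) (↑c : Set P) ∧ c.image ρ = S} : Set (Finset P)).ncard

/-- The flag `h`-vector entry `h_S`. -/
noncomputable def flagH (P : Type*) [PartialOrder P] (ρ : P → ℕ) (S : Finset ℕ) : ℤ :=
  ∑ T ∈ S.powerset, (-1) ^ (S.card - T.card) * flagF P ρ T

/-- The `ab`-index `Ψ(P) = ∑_S h_S u_S` of a poset `P` of rank `n+1` with rank
function `ρ` (the elements of ranks `1,…,n` are the proper part of `P`). -/
noncomputable def Psi (P : Type*) [PartialOrder P] (ρ : P → ℕ) (n : ℕ) : AB :=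
  ∑ S ∈ (Finset.Icc 1 n).powerset, MonoidAlgebra.single (word n S) (flagH P ρ S)


open scoped Classical

/-- Extend a function on `ab`-monomials linearly to all of `ℤ⟨a,b⟩`. -/
noncomputable def extendMon (g : List Bool → AB) : AB → AB := fun w =>
  w.coeff.sum fun m c => c • g (FreeMonoid.toList m)

/-- The Möbius function of a finite poset. -/
noncomputable def muP (P : Type*) [PartialOrder P] [Fintype P] (x y : P) : ℤ :=
  letI := Classical.decEq P
  letI : DecidableRel (α := P) (· < ·) := Classical.decRel _
  letI : DecidableRel (α := P) (· ≤ ·) := Classical.decRel _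
  letI := Fintype.toLocallyFiniteOrder (α := P)
  IncidenceAlgebra.mu ℤ x y

/-- The map `λ_t`, sending `b^m ↦ (a-b)^m`, `b^m a ↦ (a-b)^{m+1}`, and all other
monomials to `0`. -/
noncomputable def lambdatMon (l : List Bool) : AB :=
  if ∃ m : ℕ, l = List.replicate m true ∨ l = List.replicate m true ++ [false] then
    (aV - bV) ^ l.length
  else 0

section Aux
variable {P : Type*} [Fintype P] [PartialOrder P] [BoundedOrder P]

/-- Chains in the open interval `(⊥, x)`. -/
noncomputable def chainsBelow (x : P) : Finset (Finset P) :=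
  Finset.univ.filter (fun c : Finset P =>
    IsChain (· ≤ ·) (↑c : Set P) ∧ ∀ z ∈ c, ⊥ < z ∧ z < x)

/-- The maximum of a (nonempty) chain, as a choice function. -/
noncomputable def chainTop (c : Finset P) : P :=
  if h : ∃ x, x ∈ c ∧ ∀ y ∈ c, y ≤ x then h.choose else ⊥

lemma chainTop_spec {c : Finset P} (h : ∃ x, x ∈ c ∧ ∀ y ∈ c, y ≤ x) :
    chainTop c ∈ c ∧ ∀ y ∈ c, y ≤ chainTop c := by
  rw [chainTop, dif_pos h]; exact h.choose_spec

lemma exists_max_of_chain {c : Finset P} (hc : IsChain (· ≤ ·) (↑c : Set P))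
    (hne : c.Nonempty) : ∃ x, x ∈ c ∧ ∀ y ∈ c, y ≤ x := by
  obtain ⟨m, hm, hmax⟩ := Finset.exists_maximal hne
  refine ⟨m, hm, fun y hy => ?_⟩
  rcases eq_or_ne y m with rfl | hne'
  · exact le_rfl
  · rcases hc (Finset.mem_coe.2 hy) (Finset.mem_coe.2 hm) hne' with h | h
    · exact h
    · exact absurd (le_antisymm h (hmax hy h)) (fun e => hne' e.symm)

lemma chainTop_insert {x : P} {c : Finset P} (hlt : ∀ z ∈ c, z < x) :
    chainTop (insert x c) = x := by
  have hex : ∃ y, y ∈ insert x c ∧ ∀ z ∈ insert x c, z ≤ y := by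
    refine ⟨x, Finset.mem_insert_self _ _, fun z hz => ?_⟩
    rcases Finset.mem_insert.1 hz with rfl | hz
    · exact le_rfl
    · exact (hlt z hz).le
  obtain ⟨hmem, hmax⟩ := chainTop_spec hex
  have h1 : chainTop (insert x c) ≤ x := by
    rcases Finset.mem_insert.1 hmem with h | h
    · exact le_of_eq h
    · exact (hlt _ h).le
  exact le_antisymm h1 (hmax x (Finset.mem_insert_self _ _))

lemma muP_self : muP P (⊥ : P) ⊥ = 1 := by
  unfold muP
  simp

lemma muP_rec (x : P) (hx : (⊥ : P) < x) :
    muP P ⊥ x = -(1 + ∑ z ∈ Finset.univ.filter (fun z : P => ⊥ < z ∧ z < x), muP P ⊥ z) := by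
  unfold muP
  letI := Classical.decEq P
  letI : DecidableRel (α := P) (· < ·) := Classical.decRel _
  letI : DecidableRel (α := P) (· ≤ ·) := Classical.decRel _
  letI := Fintype.toLocallyFiniteOrder (α := P)
  rw [IncidenceAlgebra.mu_eq_neg_sum_Ico_of_ne (𝕜 := ℤ) hx.ne]
  congr 1
  have hIco : Finset.Ico (⊥ : P) x
      = insert ⊥ (Finset.univ.filter (fun z : P => ⊥ < z ∧ z < x)) := by
    ext z
    simp only [Finset.mem_Ico, Finset.mem_insert, Finset.mem_filter, Finset.mem_univ, true_and]
    constructor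
    · rintro ⟨-, hzx⟩
      rcases eq_or_lt_of_le (bot_le : (⊥ : P) ≤ z) with h | h
      · exact Or.inl h.symm
      · exact Or.inr ⟨h, hzx⟩
    · rintro (rfl | ⟨h1, h2⟩)
      · exact ⟨le_rfl, hx⟩
      · exact ⟨bot_le, h2⟩
  rw [hIco, Finset.sum_insert (by simp)]
  simp

/-- Generic "peel off the maximum" bijection for sums over sets of chains. -/
lemma sum_sigma_chains (X : Finset P) (D : Finset (Finset P))
    (h1 : ∀ c ∈ D, chainTop c ∈ c ∧ chainTop c ∈ X ∧
      c.erase (chainTop c) ∈ chainsBelow (chainTop c))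
    (h2 : ∀ x ∈ X, ∀ c ∈ chainsBelow x, insert x c ∈ D) :
    ∑ c ∈ D, (-1 : ℤ) ^ c.card
      = ∑ x ∈ X, ∑ c ∈ chainsBelow x, -(-1 : ℤ) ^ c.card := by
  classical
  have hlt : ∀ x : P, ∀ c ∈ chainsBelow x, ∀ z ∈ c, z < x := by
    intro x c hc z hz
    exact ((Finset.mem_filter.1 hc).2.2 z hz).2
  have hnotmem : ∀ x : P, ∀ c ∈ chainsBelow x, x ∉ c := by
    intro x c hc hx
    exact lt_irrefl _ (hlt x c hc x hx)
  rw [← Finset.sum_sigma (X) (fun x => chainsBelow x)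
      (fun p => -(-1 : ℤ) ^ p.2.card)]
  refine Finset.sum_bij' (fun c _ => (⟨chainTop c, c.erase (chainTop c)⟩ : Σ _x : P, Finset P))
    (fun p _ => insert p.1 p.2) ?_ ?_ ?_ ?_ ?_
  · intro c hc
    exact Finset.mem_sigma.2 ⟨(h1 c hc).2.1, (h1 c hc).2.2⟩
  · intro p hp
    rw [Finset.mem_sigma] at hp
    exact h2 p.1 hp.1 p.2 hp.2
  · intro c hc
    exact Finset.insert_erase (h1 c hc).1
  · intro p hp
    rw [Finset.mem_sigma] at hp
    have htop := chainTop_insert (hlt p.1 p.2 hp.2)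
    have : ((⟨chainTop (insert p.1 p.2), (insert p.1 p.2).erase (chainTop (insert p.1 p.2))⟩ :
        Σ _x : P, Finset P)) = ⟨p.1, p.2⟩ := by
      rw [htop, Finset.erase_insert (hnotmem p.1 p.2 hp.2)]
    exact this
  · intro c hc
    have hcard : c.card = (c.erase (chainTop c)).card + 1 := by
      rw [Finset.card_erase_of_mem (h1 c hc).1]
      have : 0 < c.card := Finset.card_pos.2 ⟨_, (h1 c hc).1⟩
      omega
    rw [hcard, pow_succ]
    ring

end Aux
section Hall
variable {P : Type*} [Fintype P] [PartialOrder P] [BoundedOrder P]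

lemma hall_aux (ρ : P → ℕ) (hstrict : ∀ x y : P, x < y → ρ x < ρ y) :
    ∀ k : ℕ, ∀ x : P, ρ x ≤ k → (⊥ : P) < x →
      ∑ c ∈ chainsBelow x, (-1 : ℤ) ^ c.card = - muP P ⊥ x := by
  intro k
  induction k with
  | zero =>
    intro x hx hbx
    exact absurd (hstrict _ _ hbx) (by omega)
  | succ k ih =>
    intro x hx hbx
    classical
    -- split off the empty chain
    have hsplit : ∑ c ∈ chainsBelow x, (-1 : ℤ) ^ c.card
        = 1 + ∑ c ∈ (chainsBelow x).filter (fun c => c.Nonempty), (-1 : ℤ) ^ c.card := by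
      rw [← Finset.sum_filter_add_sum_filter_not (chainsBelow x) (fun c => c.Nonempty)]
      rw [add_comm]
      congr 1
      have : (chainsBelow x).filter (fun c => ¬ c.Nonempty) = {∅} := by
        ext c
        simp only [Finset.mem_filter, Finset.not_nonempty_iff_eq_empty, Finset.mem_singleton]
        constructor
        · rintro ⟨-, rfl⟩; rfl
        · rintro rfl
          refine ⟨Finset.mem_filter.2 ⟨Finset.mem_univ _, ?_, ?_⟩, rfl⟩
          · simp
          · simp
      rw [this]
      simp
    rw [hsplit]
    have hbij := sum_sigma_chains (Finset.univ.filter (fun z : P => ⊥ < z ∧ z < x))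
      ((chainsBelow x).filter (fun c => c.Nonempty)) ?_ ?_
    · rw [hbij]
      have hinner : ∀ z ∈ Finset.univ.filter (fun z : P => ⊥ < z ∧ z < x),
          ∑ c ∈ chainsBelow z, -(-1 : ℤ) ^ c.card = muP P ⊥ z := by
        intro z hz
        simp only [Finset.mem_filter, Finset.mem_univ, true_and] at hz
        have hρ : ρ z ≤ k := by
          have h1 := hstrict _ _ hz.2
          omega
        rw [Finset.sum_neg_distrib, ih z hρ hz.1, neg_neg]
      rw [Finset.sum_congr rfl hinner, muP_rec x hbx]
      ring
    · -- h1
      intro c hc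
      rw [Finset.mem_filter] at hc
      obtain ⟨hcx, hne⟩ := hc
      rw [chainsBelow, Finset.mem_filter] at hcx
      obtain ⟨-, hchain, hmem⟩ := hcx
      have hex := exists_max_of_chain hchain hne
      obtain ⟨htopmem, htopmax⟩ := chainTop_spec hex
      refine ⟨htopmem, ?_, ?_⟩
      · simp only [Finset.mem_filter, Finset.mem_univ, true_and]
        exact hmem _ htopmem
      · simp only [chainsBelow, Finset.mem_filter, Finset.mem_univ, true_and]
        refine ⟨hchain.mono ?_, fun z hz => ?_⟩
        · intro z hz
          exact Finset.mem_coe.2 (Finset.mem_of_mem_erase (Finset.mem_coe.1 hz))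
        · obtain ⟨hzne, hzc⟩ := Finset.mem_erase.1 hz
          exact ⟨(hmem z hzc).1, lt_of_le_of_ne (htopmax z hzc) hzne⟩
    · -- h2
      intro z hz c hc
      rw [chainsBelow, Finset.mem_filter] at hc
      obtain ⟨-, hchain, hmem⟩ := hc
      simp only [Finset.mem_filter, Finset.mem_univ, true_and] at hz
      rw [Finset.mem_filter]
      refine ⟨?_, ⟨z, Finset.mem_insert_self _ _⟩⟩
      rw [chainsBelow, Finset.mem_filter]
      refine ⟨Finset.mem_univ _, ?_, ?_⟩
      · rw [Finset.coe_insert]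
        refine hchain.insert (fun b hb _ => Or.inr ?_)
        exact ((hmem b (Finset.mem_coe.1 hb)).2).le
      · intro w hw
        rcases Finset.mem_insert.1 hw with rfl | hw
        · exact hz
        · exact ⟨(hmem w hw).1, (hmem w hw).2.trans hz.2⟩
end Hall
lemma neg_one_pow_sub {s t : ℕ} (h : t ≤ s) : ((-1 : ℤ)) ^ (s - t) = (-1) ^ s * (-1) ^ t := by
  have h1 : ((-1 : ℤ)) ^ (s - t) * ((-1) ^ t * (-1) ^ t) = (-1) ^ s * (-1) ^ t := by
    rw [← mul_assoc, ← pow_add, Nat.sub_add_cancel h]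
  have h2 : ((-1 : ℤ)) ^ t * (-1) ^ t = 1 := by
    rw [← pow_add]
    exact Even.neg_one_pow ⟨t, rfl⟩
  rw [h2, mul_one] at h1
  exact h1

section Flag
variable {P : Type*} [Fintype P] [PartialOrder P] [BoundedOrder P] (ρ : P → ℕ)

lemma flagF_eq (S : Finset ℕ) :
    flagF P ρ S = ((Finset.univ.filter fun c : Finset P =>
      IsChain (· ≤ ·) (↑c : Set P) ∧ c.image ρ = S).card : ℤ) := by
  rw [flagF]
  congr 1
  rw [← Set.ncard_coe_finset]
  congr 1
  ext c
  simp

lemma chain_rho_injOn (hstrict : ∀ x y : P, x < y → ρ x < ρ y) {c : Finset P}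
    (hc : IsChain (· ≤ ·) (↑c : Set P)) : Set.InjOn ρ (↑c : Set P) := by
  intro a ha b hb hab
  by_contra hne
  rcases hc ha hb hne with h | h
  · exact absurd hab (Nat.ne_of_lt (hstrict _ _ (lt_of_le_of_ne h hne)))
  · exact absurd hab.symm (Nat.ne_of_lt (hstrict _ _ (lt_of_le_of_ne h (Ne.symm hne))))

lemma sum_powerset_f (hstrict : ∀ x y : P, x < y → ρ x < ρ y) (S : Finset ℕ) :
    ∑ T ∈ S.powerset, (-1 : ℤ) ^ T.card * flagF P ρ T
      = ∑ c ∈ Finset.univ.filter (fun c : Finset P =>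
          IsChain (· ≤ ·) (↑c : Set P) ∧ c.image ρ ⊆ S), (-1 : ℤ) ^ c.card := by
  classical
  rw [← Finset.sum_fiberwise_of_maps_to (g := fun c : Finset P => c.image ρ)
    (t := S.powerset) (fun c hc => Finset.mem_powerset.2 (Finset.mem_filter.1 hc).2.2)]
  refine Finset.sum_congr rfl fun T hT => ?_
  have hfil : (Finset.univ.filter (fun c : Finset P =>
      IsChain (· ≤ ·) (↑c : Set P) ∧ c.image ρ ⊆ S)).filter (fun c => c.image ρ = T)
      = Finset.univ.filter (fun c : Finset P =>
          IsChain (· ≤ ·) (↑c : Set P) ∧ c.image ρ = T) := by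
    ext c
    simp only [Finset.mem_filter, Finset.mem_univ, true_and]
    constructor
    · rintro ⟨⟨h1, -⟩, h3⟩; exact ⟨h1, h3⟩
    · rintro ⟨h1, rfl⟩; exact ⟨⟨h1, Finset.mem_powerset.1 hT⟩, rfl⟩
  rw [hfil, flagF_eq]
  have hcard : ∀ c ∈ Finset.univ.filter (fun c : Finset P =>
      IsChain (· ≤ ·) (↑c : Set P) ∧ c.image ρ = T), (-1 : ℤ) ^ c.card = (-1) ^ T.card := by
    intro c hc
    simp only [Finset.mem_filter, Finset.mem_univ, true_and] at hc
    obtain ⟨h1, h2⟩ := hc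
    have : T.card = c.card := by
      rw [← h2]
      exact Finset.card_image_of_injOn (chain_rho_injOn ρ hstrict h1)
    rw [this]
  rw [Finset.sum_congr rfl hcard, Finset.sum_const, nsmul_eq_mul, mul_comm]

lemma flagH_eq (S : Finset ℕ) :
    flagH P ρ S = (-1 : ℤ) ^ S.card * ∑ T ∈ S.powerset, (-1 : ℤ) ^ T.card * flagF P ρ T := by
  rw [flagH, Finset.mul_sum]
  refine Finset.sum_congr rfl fun T hT => ?_
  rw [neg_one_pow_sub (Finset.card_le_card (Finset.mem_powerset.1 hT)), mul_assoc]

end Flag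
lemma lambdat_word (n : ℕ) (S : Finset ℕ) (hS : S ⊆ Finset.Icc 1 n) :
    lambdatMon (FreeMonoid.toList (word n S)) =
      if S = Finset.Icc 1 n ∨ (∃ m, n = m + 1 ∧ S = Finset.Icc 1 m) then (aV - bV) ^ n
      else 0 := by
  have hL : FreeMonoid.toList (word n S)
      = List.ofFn (fun i : Fin n => decide ((i : ℕ) + 1 ∈ S)) := rfl
  set L := List.ofFn (fun i : Fin n => decide ((i : ℕ) + 1 ∈ S)) with hLdef
  have hlen : L.length = n := List.length_ofFn
  have hget : ∀ (i : ℕ) (h : i < n), L[i]'(by omega) = decide ((i + 1) ∈ S) := by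
    intro i h
    simp [hLdef]
  have hiff : (∃ m : ℕ, L = List.replicate m true ∨ L = List.replicate m true ++ [false]) ↔
      (S = Finset.Icc 1 n ∨ (∃ m, n = m + 1 ∧ S = Finset.Icc 1 m)) := by
    constructor
    · rintro ⟨m, h | h⟩
      · left
        have hm : m = n := by
          have := congrArg List.length h
          simpa [hlen] using this.symm
        subst hm
        ext k
        simp only [Finset.mem_Icc]
        constructor
        · intro hk
          have := Finset.mem_Icc.1 (hS hk)
          exact this
        · rintro ⟨hk1, hk2⟩
          have hlt : k - 1 < m := by omega
          have h1 : L[k-1]'(by omega) = true := by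
            simp only [h]
            simp
          rw [hget (k-1) hlt] at h1
          have : k - 1 + 1 = k := by omega
          rw [this] at h1
          exact of_decide_eq_true h1
      · right
        have hm : n = m + 1 := by
          have := congrArg List.length h
          simpa [hlen] using this
        refine ⟨m, hm, ?_⟩
        ext k
        simp only [Finset.mem_Icc]
        constructor
        · intro hk
          have hk' := Finset.mem_Icc.1 (hS hk)
          refine ⟨hk'.1, ?_⟩
          by_contra hc
          have hkn : k = m + 1 := by omega
          have h1 : L[m]'(by omega) = false := by
            simp only [h]
            rw [List.getElem_append]
            simp
          rw [hget m (by omega)] at h1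
          rw [hkn] at hk
          simpa [hk] using h1
        · rintro ⟨hk1, hk2⟩
          have h1 : L[k-1]'(by omega) = true := by
            simp only [h]
            rw [List.getElem_append]
            rw [dif_pos (by simp; omega)]
            simp
          rw [hget (k-1) (by omega)] at h1
          have : k - 1 + 1 = k := by omega
          rw [this] at h1
          exact of_decide_eq_true h1
    · rintro (rfl | ⟨m, rfl, rfl⟩)
      · refine ⟨n, Or.inl ?_⟩
        rw [List.eq_replicate_iff]
        refine ⟨hlen, fun b hb => ?_⟩
        rw [hLdef] at hb
        rw [List.mem_ofFn] at hb
        obtain ⟨i, hi⟩ := hb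
        rw [← hi]
        simp only [decide_eq_true_eq, Finset.mem_Icc]
        omega
      · refine ⟨m, Or.inr ?_⟩
        apply List.ext_getElem
        · simp [hlen]
        · intro i h1 h2
          rw [hget i (by omega), List.getElem_append]
          rcases lt_or_ge i m with hi | hi
          · rw [dif_pos (by simpa using hi)]
            simp only [List.getElem_replicate, decide_eq_true_eq, Finset.mem_Icc]
            omega
          · have him : i = m := by
              simp only [List.length_append, List.length_replicate, List.length_cons,
                List.length_nil] at h2
              omega
            rw [dif_neg (by simpa using not_lt.2 hi)]
            subst him
            simp only [List.length_replicate, Nat.sub_self, List.getElem_cons_zero,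
              decide_eq_false_iff_not, Finset.mem_Icc]
            omega
  rw [hL, lambdatMon]
  by_cases hcond : ∃ m : ℕ, L = List.replicate m true ∨ L = List.replicate m true ++ [false]
  · rw [if_pos hcond, if_pos (hiff.1 hcond), hlen]
  · rw [if_neg hcond, if_neg (fun h => hcond (hiff.2 h))]
section MainAux
variable {P : Type*} [Fintype P] [PartialOrder P] [BoundedOrder P]

lemma coatom_iff (ρ : P → ℕ) (n : ℕ) (htop : ρ ⊤ = n + 1)
    (hstrict : ∀ x y : P, x < y → ρ x < ρ y)
    (hcov : ∀ x y : P, x ⋖ y → ρ y = ρ x + 1) (x : P) :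
    x ⋖ ⊤ ↔ ρ x = n := by
  constructor
  · intro h
    have := hcov x ⊤ h
    omega
  · intro h
    have hne : x ≠ ⊤ := fun e => by rw [e, htop] at h; omega
    have hlt : x < ⊤ := lt_of_le_of_ne le_top hne
    refine ⟨hlt, fun y hy hyt => ?_⟩
    have h1 := hstrict _ _ hy
    have h2 := hstrict _ _ hyt
    rw [htop] at h2
    omega

lemma bot_lt_of_rho_pos (ρ : P → ℕ) (hbot : ρ ⊥ = 0) {x : P} (hx : 0 < ρ x) :
    (⊥ : P) < x := by
  have : x ≠ ⊥ := fun e => by rw [e, hbot] at hx; omega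
  exact lt_of_le_of_ne bot_le (Ne.symm this)

lemma scalar_succ (ρ : P → ℕ) (m : ℕ) (hbot : ρ ⊥ = 0) (htop : ρ ⊤ = m + 2)
    (hstrict : ∀ x y : P, x < y → ρ x < ρ y)
    (hcov : ∀ x y : P, x ⋖ y → ρ y = ρ x + 1) :
    flagH P ρ (Finset.Icc 1 (m + 1)) + flagH P ρ (Finset.Icc 1 m)
      = (-1 : ℤ) ^ (m + 1) *
          ∑ x ∈ Finset.univ.filter (fun x : P => x ⋖ ⊤), muP P (⊥ : P) x := by
  classical
  set Sn := Finset.univ.filter (fun c : Finset P =>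
    IsChain (· ≤ ·) (↑c : Set P) ∧ c.image ρ ⊆ Finset.Icc 1 (m + 1)) with hSn
  set Sm := Finset.univ.filter (fun c : Finset P =>
    IsChain (· ≤ ·) (↑c : Set P) ∧ c.image ρ ⊆ Finset.Icc 1 m) with hSm
  have hsub : Sm ⊆ Sn := by
    intro c hc
    simp only [hSn, hSm, Finset.mem_filter] at hc ⊢
    exact ⟨hc.1, hc.2.1, hc.2.2.trans (Finset.Icc_subset_Icc_right (by omega))⟩
  have hHn : flagH P ρ (Finset.Icc 1 (m + 1))
      = (-1 : ℤ) ^ (m + 1) * ∑ c ∈ Sn, (-1 : ℤ) ^ c.card := by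
    rw [flagH_eq, sum_powerset_f ρ hstrict, Nat.card_Icc, ← hSn]
    norm_num
  have hHm : flagH P ρ (Finset.Icc 1 m)
      = (-1 : ℤ) ^ m * ∑ c ∈ Sm, (-1 : ℤ) ^ c.card := by
    rw [flagH_eq, sum_powerset_f ρ hstrict, Nat.card_Icc, ← hSm]
    norm_num
  rw [hHn, hHm]
  have hmsign : (-1 : ℤ) ^ m = -(-1 : ℤ) ^ (m + 1) := by
    rw [pow_succ]; ring
  rw [hmsign]
  have hsdiff : ∑ c ∈ Sn \ Sm, (-1 : ℤ) ^ c.card + ∑ c ∈ Sm, (-1 : ℤ) ^ c.card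
      = ∑ c ∈ Sn, (-1 : ℤ) ^ c.card := Finset.sum_sdiff hsub
  -- the key bijection
  have hbij := sum_sigma_chains (Finset.univ.filter (fun x : P => x ⋖ ⊤)) (Sn \ Sm) ?_ ?_
  · have hinner : ∀ x ∈ Finset.univ.filter (fun x : P => x ⋖ ⊤),
        ∑ c ∈ chainsBelow x, -(-1 : ℤ) ^ c.card = muP P ⊥ x := by
      intro x hx
      simp only [Finset.mem_filter, Finset.mem_univ, true_and] at hx
      have hρx : ρ x = m + 1 := (coatom_iff ρ (m + 1) htop hstrict hcov x).1 hx
      have hbx : (⊥ : P) < x := bot_lt_of_rho_pos ρ hbot (by omega)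
      rw [Finset.sum_neg_distrib, hall_aux ρ hstrict (ρ x) x le_rfl hbx, neg_neg]
    rw [Finset.sum_congr rfl hinner] at hbij
    rw [← hsdiff, hbij]
    ring
  · -- h1 of the bijection
    intro c hc
    rw [Finset.mem_sdiff] at hc
    obtain ⟨hcn, hcm⟩ := hc
    simp only [hSn, Finset.mem_filter, Finset.mem_univ, true_and] at hcn
    obtain ⟨hchain, himg⟩ := hcn
    have hz : ∃ z ∈ c, ρ z = m + 1 := by
      simp only [hSm, Finset.mem_filter, Finset.mem_univ, true_and] at hcm
      have : ¬ c.image ρ ⊆ Finset.Icc 1 m := fun h => hcm ⟨hchain, h⟩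
      rw [Finset.not_subset] at this
      obtain ⟨k, hk1, hk2⟩ := this
      obtain ⟨z, hz, rfl⟩ := Finset.mem_image.1 hk1
      have := Finset.mem_Icc.1 (himg hk1)
      refine ⟨z, hz, ?_⟩
      simp only [Finset.mem_Icc] at hk2
      omega
    obtain ⟨z₀, hz₀c, hz₀ρ⟩ := hz
    have hrank : ∀ y ∈ c, ρ y ≤ m + 1 := by
      intro y hy
      have := Finset.mem_Icc.1 (himg (Finset.mem_image_of_mem ρ hy))
      omega
    have hmax : ∀ y ∈ c, y ≤ z₀ := by
      intro y hy
      rcases eq_or_ne y z₀ with rfl | hne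
      · exact le_rfl
      · rcases hchain (Finset.mem_coe.2 hy) (Finset.mem_coe.2 hz₀c) hne with h | h
        · exact h
        · exfalso
          have := hstrict _ _ (lt_of_le_of_ne h hne.symm)
          have := hrank y hy
          omega
    have hex : ∃ x, x ∈ c ∧ ∀ y ∈ c, y ≤ x := ⟨z₀, hz₀c, hmax⟩
    obtain ⟨htopmem, htopmax⟩ := chainTop_spec hex
    have htopeq : chainTop c = z₀ := le_antisymm (hmax _ htopmem) (htopmax _ hz₀c)
    refine ⟨htopmem, ?_, ?_⟩
    · simp only [Finset.mem_filter, Finset.mem_univ, true_and]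
      rw [coatom_iff ρ (m + 1) htop hstrict hcov, htopeq]
      exact hz₀ρ
    · rw [chainsBelow, Finset.mem_filter]
      refine ⟨Finset.mem_univ _, hchain.mono ?_, fun w hw => ?_⟩
      · intro w hw
        exact Finset.mem_coe.2 (Finset.mem_of_mem_erase (Finset.mem_coe.1 hw))
      · obtain ⟨hwne, hwc⟩ := Finset.mem_erase.1 hw
        have h1 : 0 < ρ w := by
          have := Finset.mem_Icc.1 (himg (Finset.mem_image_of_mem ρ hwc))
          omega
        exact ⟨bot_lt_of_rho_pos ρ hbot h1, lt_of_le_of_ne (htopmax w hwc) hwne⟩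
  · -- h2 of the bijection
    intro x hx c hc
    simp only [Finset.mem_filter, Finset.mem_univ, true_and] at hx
    have hρx : ρ x = m + 1 := (coatom_iff ρ (m + 1) htop hstrict hcov x).1 hx
    rw [chainsBelow, Finset.mem_filter] at hc
    obtain ⟨-, hchain, hmem⟩ := hc
    rw [Finset.mem_sdiff]
    constructor
    · simp only [hSn, Finset.mem_filter, Finset.mem_univ, true_and]
      refine ⟨?_, ?_⟩
      · rw [Finset.coe_insert]
        refine hchain.insert (fun b hb _ => Or.inr ?_)
        exact ((hmem b (Finset.mem_coe.1 hb)).2).le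
      · intro k hk
        rw [Finset.image_insert, Finset.mem_insert] at hk
        rcases hk with rfl | hk
        · simp only [Finset.mem_Icc]; omega
        · obtain ⟨w, hw, rfl⟩ := Finset.mem_image.1 hk
          have h1 := hstrict _ _ (hmem w hw).1
          have h2 := hstrict _ _ (hmem w hw).2
          rw [hbot] at h1
          simp only [Finset.mem_Icc]
          omega
    · simp only [hSm, Finset.mem_filter, Finset.mem_univ, true_and]
      rintro ⟨-, himg⟩
      have : ρ x ∈ Finset.Icc 1 m :=
        himg (Finset.mem_image_of_mem ρ (Finset.mem_insert_self _ _))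
      simp only [Finset.mem_Icc] at this
      omega

lemma scalar_zero (ρ : P → ℕ) (hbot : ρ ⊥ = 0) (htop : ρ ⊤ = 1)
    (hstrict : ∀ x y : P, x < y → ρ x < ρ y)
    (hcov : ∀ x y : P, x ⋖ y → ρ y = ρ x + 1) :
    flagH P ρ ∅ = (-1 : ℤ) ^ 0 *
      ∑ x ∈ Finset.univ.filter (fun x : P => x ⋖ ⊤), muP P (⊥ : P) x := by
  classical
  have hcoat : Finset.univ.filter (fun x : P => x ⋖ ⊤) = {(⊥ : P)} := by
    ext x
    simp only [Finset.mem_filter, Finset.mem_univ, true_and, Finset.mem_singleton]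
    rw [coatom_iff ρ 0 htop hstrict hcov]
    constructor
    · intro h
      by_contra hne
      have := hstrict _ _ (lt_of_le_of_ne bot_le (Ne.symm hne))
      omega
    · rintro rfl; exact hbot
  rw [hcoat, Finset.sum_singleton, muP_self]
  have hF : flagF P ρ ∅ = 1 := by
    rw [flagF_eq]
    have : Finset.univ.filter (fun c : Finset P =>
        IsChain (· ≤ ·) (↑c : Set P) ∧ c.image ρ = ∅) = {(∅ : Finset P)} := by
      ext c
      simp only [Finset.mem_filter, Finset.mem_univ, true_and, Finset.mem_singleton,
        Finset.image_eq_empty]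
      constructor
      · rintro ⟨-, h⟩; exact h
      · rintro rfl; simp
    rw [this]
    simp
  rw [flagH]
  simp [hF]

end MainAux
/-- For a graded poset `P` of rank at least 1,
`λ_t(Ψ(P)) = Z_t(P) ⬝ (a-b)^{ρ(P)-1}`, where
`Z_t(P) = (-1)^{ρ(P)-1} ∑_{x coatom of P} μ(0̂,x)`. -/
theorem lambdat_Psi (n : ℕ) (P : Type*) [Fintype P] [PartialOrder P]
    [BoundedOrder P] (ρ : P → ℕ)
    (hbot : ρ ⊥ = 0) (htop : ρ ⊤ = n + 1)
    (hstrict : ∀ x y : P, x < y → ρ x < ρ y)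
    (hcov : ∀ x y : P, x ⋖ y → ρ y = ρ x + 1) :
    extendMon lambdatMon (Psi P ρ n) =
      ((-1) ^ n * ∑ x ∈ Finset.univ.filter (fun x : P => x ⋖ ⊤), muP P (⊥ : P) x) •
        (aV - bV) ^ n := by
  classical
  have hstep1 : extendMon lambdatMon (Psi P ρ n)
      = ∑ S ∈ (Finset.Icc 1 n).powerset,
          flagH P ρ S • lambdatMon (FreeMonoid.toList (word n S)) := by
    show (Psi P ρ n).coeff.sum (fun m c => c • lambdatMon (FreeMonoid.toList m)) = _
    rw [Psi, MonoidAlgebra.coeff_sum]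
    exact (Finsupp.sum_finsetSum_index (h := fun m c => c • lambdatMon (FreeMonoid.toList m))
        (fun i => zero_smul ℤ _) (fun i x y => add_smul x y _)).symm.trans
      (Finset.sum_congr rfl fun S _ => Finsupp.sum_single_index (zero_smul ℤ _))
  rw [hstep1]
  have hstep2 : ∀ S ∈ (Finset.Icc 1 n).powerset,
      flagH P ρ S • lambdatMon (FreeMonoid.toList (word n S))
        = (if S = Finset.Icc 1 n ∨ (∃ m, n = m + 1 ∧ S = Finset.Icc 1 m)
            then flagH P ρ S else 0) • (aV - bV) ^ n := by
    intro S hS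
    rw [lambdat_word n S (Finset.mem_powerset.1 hS)]
    split_ifs with h
    · rfl
    · simp
  rw [Finset.sum_congr rfl hstep2, ← Finset.sum_smul]
  congr 1
  rw [← Finset.sum_filter]
  rcases n with _ | m
  · have hfil : (Finset.Icc 1 0).powerset.filter
        (fun S => S = Finset.Icc 1 0 ∨ ∃ m, 0 = m + 1 ∧ S = Finset.Icc 1 m)
        = {(∅ : Finset ℕ)} := by
      ext T
      simp only [Finset.mem_filter, Finset.mem_powerset, Finset.mem_singleton]
      rw [Finset.Icc_eq_empty (by omega)]
      constructor
      · rintro ⟨h1, -⟩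
        exact Finset.subset_empty.1 h1
      · rintro rfl
        exact ⟨Finset.Subset.refl _, Or.inl rfl⟩
    rw [hfil, Finset.sum_singleton]
    exact scalar_zero ρ hbot (by simpa using htop) hstrict hcov
  · have hmem : (m + 1 : ℕ) ∈ Finset.Icc 1 (m + 1) := by simp
    have hne : Finset.Icc 1 (m + 1) ≠ Finset.Icc 1 m := by
      intro h
      rw [h] at hmem
      simp only [Finset.mem_Icc] at hmem
      omega
    have hfil : (Finset.Icc 1 (m + 1)).powerset.filter
        (fun S => S = Finset.Icc 1 (m + 1) ∨ ∃ m', m + 1 = m' + 1 ∧ S = Finset.Icc 1 m')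
        = {Finset.Icc 1 (m + 1), Finset.Icc 1 m} := by
      ext T
      simp only [Finset.mem_filter, Finset.mem_powerset, Finset.mem_insert,
        Finset.mem_singleton]
      constructor
      · rintro ⟨-, rfl | ⟨m', hm', rfl⟩⟩
        · exact Or.inl rfl
        · have : m' = m := by omega
          subst this
          exact Or.inr rfl
      · rintro (rfl | rfl)
        · exact ⟨Finset.Subset.refl _, Or.inl rfl⟩
        · exact ⟨Finset.Icc_subset_Icc_right (by omega), Or.inr ⟨m, rfl, rfl⟩⟩
    rw [hfil, Finset.sum_pair hne]
    exact scalar_succ ρ m hbot (by simpa using htop) hstrict hcov
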